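/- Let ζ ∈ L¹(ℝ) with |ζ̂(s)| ≤ (1+|s|)^{−1/2−δ} for some δ > 0, where ζ̂(s) = ∫_ℝ e^{−isx}ζ(x)dx, let k > 0, and let μ ∈ (0,1). Then lim_{ε→∞} Σ_{j∈ℤ} | ζ̂( kε(j−μ) ) |² = 0. -/
import Mathlib


open MeasureTheory Filter

/-- The Fourier transform `ζ̂(s) = ∫ e^{−isx} ζ(x) dx`. -/
noncomputable def zetaHat (ζ : ℝ → ℝ) (s : ℝ) : ℂ :=
  ∫ x : ℝ, Complex.exp (-(↑(s * x) : ℂ) * Complex.I) * (ζ x : ℂ)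

/-- decay of the twisted convolution operator norm as the nonlocality
parameter `ε → ∞`: for `μ ∈ (0,1)`, `Σ_{j∈ℤ} |ζ̂(kε(j−μ))|² → 0`. -/
theorem multiplier_symbol_decay_large_eps
    (ζ : ℝ → ℝ) (hζ : Integrable ζ)
    (δ : ℝ) (hδ : 0 < δ)
    (hhat : ∀ s : ℝ, ‖zetaHat ζ s‖ ≤ (1 + |s|) ^ (-(1 / 2 : ℝ) - δ))
    (k : ℝ) (hk : 0 < k) (μ : ℝ) (hμ : μ ∈ Set.Ioo (0:ℝ) 1) :
    Tendsto (fun ε : ℝ => ∑' j : ℤ, ‖zetaHat ζ (k * ε * ((j : ℝ) - μ))‖ ^ 2)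
      atTop (nhds 0) := by
  obtain ⟨hμ0, hμ1⟩ := hμ
  set c : ℝ := min μ (1 - μ) with hc_def
  have hc : 0 < c := lt_min hμ0 (by linarith)
  set b : ℝ := 1 + 2 * δ with hb_def
  have hb1 : 1 < b := by simp [hb_def]; linarith
  have hb : 0 < b := by linarith
  -- key geometric inequality
  have key : ∀ j : ℤ, c / 2 * (1 + |(j : ℝ)|) ≤ |(j : ℝ) - μ| := by
    intro j
    rcases eq_or_ne j 0 with rfl | hj
    · have hcm : c ≤ μ := min_le_left _ _
      simp only [Int.cast_zero, abs_zero, zero_sub, abs_neg, abs_of_pos hμ0]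
      linarith
    · have h1 : (1:ℝ) ≤ |(j:ℝ)| := by
        have := Int.one_le_abs hj
        calc (1:ℝ) ≤ ((|j| : ℤ) : ℝ) := by exact_mod_cast this
        _ = |(j:ℝ)| := by push_cast; ring
      have h2 : |(j:ℝ)| - μ ≤ |(j:ℝ) - μ| := by
        have := abs_sub_abs_le_abs_sub (j:ℝ) μ
        rw [abs_of_pos hμ0] at this
        linarith
      have hcm : c ≤ μ := min_le_left _ _
      have hcm' : c ≤ 1 - μ := min_le_right _ _
      nlinarith [abs_nonneg (j:ℝ)]
  -- summable majorant
  have hsumm : Summable (fun j : ℤ => (1 + |(j:ℝ)|) ^ (-b)) := by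
    have base : Summable (fun j : ℤ => |(j:ℝ)| ^ (-b)) := Real.summable_abs_int_rpow hb1
    refine (base.update 0 1).of_nonneg_of_le (fun j => Real.rpow_nonneg (by positivity) _) ?_
    intro j
    rcases eq_or_ne j 0 with rfl | hj
    · simp [Function.update_self]
    · rw [Function.update_of_ne hj]
      have hpos : (0:ℝ) < |(j:ℝ)| := by
        have : (j:ℝ) ≠ 0 := Int.cast_ne_zero.mpr hj
        positivity
      exact Real.rpow_le_rpow_of_nonpos hpos (by linarith [abs_nonneg (j:ℝ)]) (by linarith)
  set C : ℝ := ∑' j : ℤ, (1 + |(j:ℝ)|) ^ (-b) with hC_def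
  -- upper bound function
  have hupper : ∀ᶠ ε : ℝ in atTop,
      (∑' j : ℤ, ‖zetaHat ζ (k * ε * ((j : ℝ) - μ))‖ ^ 2) ≤ (k * c / 2 * ε) ^ (-b) * C := by
    filter_upwards [eventually_ge_atTop (max 1 (2 / (k * c)))] with ε hε
    have hε1 : (1:ℝ) ≤ ε := le_trans (le_max_left _ _) hε
    have hε0 : (0:ℝ) < ε := by linarith
    have hA : (0:ℝ) < k * c / 2 * ε := by positivity
    have hterm : ∀ j : ℤ, ‖zetaHat ζ (k * ε * ((j : ℝ) - μ))‖ ^ 2 ≤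
        (k * c / 2 * ε) ^ (-b) * (1 + |(j:ℝ)|) ^ (-b) := by
      intro j
      set s : ℝ := k * ε * ((j : ℝ) - μ) with hs_def
      have hbase : (0:ℝ) < 1 + |s| := by positivity
      have h1 : ‖zetaHat ζ s‖ ^ 2 ≤ ((1 + |s|) ^ (-(1 / 2 : ℝ) - δ)) ^ 2 :=
        pow_le_pow_left₀ (norm_nonneg _) (hhat s) 2
      have h2 : ((1 + |s|) ^ (-(1 / 2 : ℝ) - δ)) ^ 2 = (1 + |s|) ^ (-b) := by
        rw [← Real.rpow_natCast ((1 + |s|) ^ (-(1 / 2 : ℝ) - δ)) 2,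
          ← Real.rpow_mul hbase.le]
        norm_num [hb_def]
        ring_nf
      have h3 : (k * c / 2 * ε) * (1 + |(j:ℝ)|) ≤ 1 + |s| := by
        have habs : |s| = k * ε * |(j:ℝ) - μ| := by
          rw [hs_def, abs_mul, abs_of_pos (by positivity : (0:ℝ) < k * ε)]
        have : k * ε * (c / 2 * (1 + |(j:ℝ)|)) ≤ k * ε * |(j:ℝ) - μ| :=
          mul_le_mul_of_nonneg_left (key j) (by positivity)
        rw [habs]
        nlinarith [abs_nonneg ((j:ℝ) - μ)]
      have h4 : (1 + |s|) ^ (-b) ≤ ((k * c / 2 * ε) * (1 + |(j:ℝ)|)) ^ (-b) :=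
        Real.rpow_le_rpow_of_nonpos (by positivity) h3 (by linarith)
      have h5 : ((k * c / 2 * ε) * (1 + |(j:ℝ)|)) ^ (-b)
          = (k * c / 2 * ε) ^ (-b) * (1 + |(j:ℝ)|) ^ (-b) :=
        Real.mul_rpow hA.le (by positivity)
      calc ‖zetaHat ζ s‖ ^ 2 ≤ (1 + |s|) ^ (-b) := by rw [← h2]; exact h1
        _ ≤ _ := by rw [← h5]; exact h4
    have hsumm2 : Summable (fun j : ℤ => (k * c / 2 * ε) ^ (-b) * (1 + |(j:ℝ)|) ^ (-b)) :=
      hsumm.mul_left _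
    have hsummL : Summable (fun j : ℤ => ‖zetaHat ζ (k * ε * ((j : ℝ) - μ))‖ ^ 2) :=
      hsumm2.of_nonneg_of_le (fun j => by positivity) hterm
    calc (∑' j : ℤ, ‖zetaHat ζ (k * ε * ((j : ℝ) - μ))‖ ^ 2)
        ≤ ∑' j : ℤ, (k * c / 2 * ε) ^ (-b) * (1 + |(j:ℝ)|) ^ (-b) :=
          Summable.tsum_le_tsum hterm hsummL hsumm2
      _ = (k * c / 2 * ε) ^ (-b) * C := by rw [tsum_mul_left]
  have hlower : ∀ᶠ ε : ℝ in atTop,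
      (0:ℝ) ≤ ∑' j : ℤ, ‖zetaHat ζ (k * ε * ((j : ℝ) - μ))‖ ^ 2 := by
    filter_upwards with ε
    exact tsum_nonneg (fun j => by positivity)
  have hg : Tendsto (fun ε : ℝ => (k * c / 2 * ε) ^ (-b) * C) atTop (nhds 0) := by
    have h1 : Tendsto (fun ε : ℝ => k * c / 2 * ε) atTop atTop :=
      Tendsto.const_mul_atTop (by positivity) tendsto_id
    have h2 : Tendsto (fun ε : ℝ => (k * c / 2 * ε) ^ (-b)) atTop (nhds 0) :=
      (tendsto_rpow_neg_atTop hb).comp h1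
    simpa using h2.mul_const C
  exact tendsto_of_tendsto_of_tendsto_of_le_of_le' tendsto_const_nhds hg hlower hupper
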